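/- Let G' be obtained from a graph G by subdividing an edge f into edges e₁, e₂, and let φ_f : R[G] → R[G'] be the ring map with φ_f(x_f) = x_{e₁} + x_{e₂} and φ_f(x_e) = x_e otherwise. Assume the transvection directions satisfy ℓ_f = ℓ_{e₁} = ℓ_{e₂} (the three curves are isotopic). Then (1 ⊗ φ_f) ∘ (δ_G − I) = (δ_{G'} − I) ∘ (1 ⊗ φ_f) as maps H ⊗ R[G] → H ⊗ R[G']. -/

import Mathlib

open TensorProduct MvPolynomial

private lemma aux_mul_list_sum {R M : Type*} [CommRing R] [AddCommGroup M] [Module R M]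
    (s : Module.End R M) :
    ∀ (u : List (Module.End R M)), (∀ g ∈ u, s * g = 0) → s * u.sum = 0
  | [], _ => by simp
  | a :: u, hu => by
      rw [List.sum_cons, mul_add, hu a (List.mem_cons_self),
        aux_mul_list_sum s u (fun g hg => hu g (List.mem_cons_of_mem a hg)), add_zero]

private lemma aux_prod_one_add {R M : Type*} [CommRing R] [AddCommGroup M] [Module R M] :
    ∀ (l : List (Module.End R M)), (∀ s ∈ l, ∀ t ∈ l, s * t = 0) →
      (l.map (fun s => 1 + s)).prod = 1 + l.sum
  | [], _ => by simp
  | s :: t, h => by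
      have ht : ∀ a ∈ t, ∀ b ∈ t, a * b = 0 := fun a ha b hb =>
        h a (List.mem_cons_of_mem s ha) b (List.mem_cons_of_mem s hb)
      have hst : s * t.sum = 0 := aux_mul_list_sum s t
        (fun g hg => h s (List.mem_cons_self) g (List.mem_cons_of_mem s hg))
      rw [List.map_cons, List.prod_cons, aux_prod_one_add t ht, List.sum_cons]
      have hexp : (1 + s) * (1 + List.sum t)
          = 1 + s + List.sum t + s * List.sum t := by noncomm_ring
      rw [hexp, hst, add_zero, add_assoc]

private lemma aux_ofFn_prod {R M : Type*} [CommRing R] [AddCommGroup M] [Module R M]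
    {k : ℕ} (D : Fin k → Module.End R M)
    (hS : ∀ i j, (D i - 1) * (D j - 1) = 0) :
    (List.ofFn D).prod = 1 + ∑ i, (D i - 1) := by
  have h1 : List.ofFn D = (List.ofFn (fun i => D i - 1)).map (fun s => 1 + s) := by
    rw [List.map_ofFn]
    congr 1
    funext i
    show D i = 1 + (D i - 1)
    abel
  have hmem : ∀ s ∈ List.ofFn (fun i => D i - 1), ∀ t ∈ List.ofFn (fun i => D i - 1),
      s * t = 0 := by
    intro s hs t ht
    obtain ⟨i, rfl⟩ := List.mem_ofFn.mp hs
    obtain ⟨j, rfl⟩ := List.mem_ofFn.mp ht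
    exact hS i j
  rw [h1, aux_prod_one_add _ hmem, List.sum_ofFn]

private lemma aux_sum_reindex {α : Type*} [AddCommMonoid α] {n : ℕ}
    (F : Fin n ⊕ Fin 1 → α) :
    ∑ k : Fin (n + 1), F (finSumFinEquiv.symm k)
      = (∑ i : Fin n, F (Sum.inl i)) + F (Sum.inr 0) := by
  rw [Equiv.sum_comp finSumFinEquiv.symm F, Fintype.sum_sum_type, Fin.sum_univ_one]

/-- Edge subdivision: let `G'` be obtained from `G` by subdividing
the edge `f` into `e₁ = Sum.inl f` and `e₂ = Sum.inr 0`, with corresponding curves all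
equal to `ℓ f`, and let `φ_f` be the ring map with `x_f ↦ x_{e₁} + x_{e₂}` and
`x_e ↦ x_e` otherwise. Then `(1 ⊗ φ_f) ∘ (δ_G − I) = (δ_{G'} − I) ∘ (1 ⊗ φ_f)`. -/
theorem stmt_11 {H : Type*} [AddCommGroup H] [Module ℤ H] [Module.Free ℤ H]
    (B : H →ₗ[ℤ] H →ₗ[ℤ] ℤ) (halt : ∀ h : H, B h h = 0)
    {n : ℕ} (ℓ : Fin n → H)
    (horth : ∀ i j, B (ℓ i) (ℓ j) = 0)
    (f : Fin n)
    (d : Fin n →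
      Module.End (MvPolynomial (Fin n) ℤ) ((MvPolynomial (Fin n) ℤ) ⊗[ℤ] H))
    (hd : ∀ (i : Fin n) (a : MvPolynomial (Fin n) ℤ) (h : H),
      d i (a ⊗ₜ[ℤ] h) = a ⊗ₜ[ℤ] h + (X i * a) ⊗ₜ[ℤ] (B h (ℓ i) • ℓ i))
    (d' : (Fin n ⊕ Fin 1) →
      Module.End (MvPolynomial (Fin n ⊕ Fin 1) ℤ)
        ((MvPolynomial (Fin n ⊕ Fin 1) ℤ) ⊗[ℤ] H))
    (hd' : ∀ (e : Fin n ⊕ Fin 1) (a : MvPolynomial (Fin n ⊕ Fin 1) ℤ) (h : H),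
      d' e (a ⊗ₜ[ℤ] h)
        = a ⊗ₜ[ℤ] h
          + (X e * a) ⊗ₜ[ℤ]
            (B h (Sum.elim ℓ (fun _ => ℓ f) e) • Sum.elim ℓ (fun _ => ℓ f) e))
    (φ : MvPolynomial (Fin n) ℤ →ₐ[ℤ] MvPolynomial (Fin n ⊕ Fin 1) ℤ)
    (hφ : ∀ e : Fin n,
      φ (X e) = if e = f then X (Sum.inl f) + X (Sum.inr 0) else X (Sum.inl e))
    (m : (MvPolynomial (Fin n) ℤ) ⊗[ℤ] H) :
    LinearMap.rTensor H φ.toLinearMap ((List.ofFn fun i => d i).prod m - m)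
      = (List.ofFn fun i : Fin (n + 1) => d' (finSumFinEquiv.symm i)).prod
          (LinearMap.rTensor H φ.toLinearMap m)
        - LinearMap.rTensor H φ.toLinearMap m := by
  classical
  -- applications of the "correction" operators
  have hSapp : ∀ (i : Fin n) (a : MvPolynomial (Fin n) ℤ) (h : H),
      (d i - 1) (a ⊗ₜ[ℤ] h) = (X i * a) ⊗ₜ[ℤ] (B h (ℓ i) • ℓ i) := by
    intro i a h
    rw [LinearMap.sub_apply, Module.End.one_apply, hd, add_sub_cancel_left]
  have hS'app : ∀ (e : Fin n ⊕ Fin 1) (a : MvPolynomial (Fin n ⊕ Fin 1) ℤ) (h : H),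
      (d' e - 1) (a ⊗ₜ[ℤ] h)
        = (X e * a) ⊗ₜ[ℤ]
            (B h (Sum.elim ℓ (fun _ => ℓ f) e) • Sum.elim ℓ (fun _ => ℓ f) e) := by
    intro e a h
    rw [LinearMap.sub_apply, Module.End.one_apply, hd', add_sub_cancel_left]
  have horth' : ∀ e e' : Fin n ⊕ Fin 1,
      B (Sum.elim ℓ (fun _ => ℓ f) e) (Sum.elim ℓ (fun _ => ℓ f) e') = 0 := by
    intro e e'
    cases e <;> cases e' <;> exact horth _ _
  have hS : ∀ i j : Fin n, (d i - 1) * (d j - 1) = 0 := by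
    intro i j
    apply LinearMap.ext
    intro x
    induction x using TensorProduct.induction_on with
    | zero => simp
    | tmul a h =>
      rw [Module.End.mul_apply, hSapp, hSapp]
      simp [horth]
    | add x y hx hy =>
      rw [map_add, hx, hy, map_add]
  have hS' : ∀ e e' : Fin n ⊕ Fin 1, (d' e - 1) * (d' e' - 1) = 0 := by
    intro e e'
    apply LinearMap.ext
    intro x
    induction x using TensorProduct.induction_on with
    | zero => simp
    | tmul a h =>
      rw [Module.End.mul_apply, hS'app, hS'app]
      simp [horth']
    | add x y hx hy =>
      rw [map_add, hx, hy, map_add]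
  have hP : (List.ofFn fun i => d i).prod = 1 + ∑ i, (d i - 1) :=
    aux_ofFn_prod _ hS
  have hP' : (List.ofFn fun i : Fin (n + 1) => d' (finSumFinEquiv.symm i)).prod
      = 1 + ∑ i : Fin (n + 1), (d' (finSumFinEquiv.symm i) - 1) :=
    aux_ofFn_prod _ (fun i j => hS' _ _)
  rw [hP, hP']
  simp only [LinearMap.add_apply, Module.End.one_apply]
  rw [add_sub_cancel_left, add_sub_cancel_left]
  induction m using TensorProduct.induction_on with
  | zero => simp
  | tmul a h =>
    simp only [LinearMap.sum_apply, map_sum, hSapp, LinearMap.rTensor_tmul,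
      AlgHom.toLinearMap_apply, map_mul, hφ, hS'app]
    refine Eq.trans ?_ (aux_sum_reindex (fun e => (X e * φ a) ⊗ₜ[ℤ]
      (B h (Sum.elim ℓ (fun _ => ℓ f) e) • Sum.elim ℓ (fun _ => ℓ f) e))).symm
    simp only [Sum.elim_inl, Sum.elim_inr]
    have hsplit : ∀ i : Fin n,
        ((if i = f then X (Sum.inl f) + X (Sum.inr 0) else X (Sum.inl i)) * φ a)
            ⊗ₜ[ℤ] (B h (ℓ i) • ℓ i)
          = (X (Sum.inl i) * φ a) ⊗ₜ[ℤ] (B h (ℓ i) • ℓ i)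
            + (if i = f then (X (Sum.inr 0) * φ a) ⊗ₜ[ℤ] (B h (ℓ f) • ℓ f) else 0) := by
      intro i
      by_cases hi : i = f
      · subst hi; rw [if_pos rfl, if_pos rfl, add_mul, add_tmul]
      · rw [if_neg hi, if_neg hi, add_zero]
    rw [Finset.sum_congr rfl (fun i _ => hsplit i), Finset.sum_add_distrib,
      Finset.sum_ite_eq']
    simp
  | add x y hx hy =>
    rw [map_add, map_add, map_add, hx, hy]
    exact (map_add _ _ _).symm
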